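/- If u is sampled uniformly from the set C = {c ∈ (ℤ/qℤ)[x]/(x^n+1) : every coefficient of c lies in {−⌊log n⌋, …, ⌊log n⌋} and deg(c) < n/2}, with q prime, q ≡ 3 mod 8, and n a power of 2, then u is invertible in R_q = (ℤ/qℤ)[x]/(x^n+1) with probability 1 − (1 + 2⌊log n⌋)^{−n/2}. -/

import Mathlib

open Polynomial


lemma geom_odd {Q s : ℤ} {m : ℕ} (hm : 1 ≤ m) (hQ : Q = 1 + 2^m * s) (hs : Odd s)
    {b : ℕ} (hb : Odd b) : ∃ s' : ℤ, Odd s' ∧ Q^b = 1 + 2^m * s' := by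
  set t : ℤ := ∑ i ∈ Finset.range b, Q^i with ht
  have hgeom : Q^b - 1 = t * (Q - 1) := (geom_sum_mul Q b).symm
  have hQ2 : ((Q : ℤ) : ZMod 2) = 1 := by
    have h0 : ((2:ℤ)^m : ZMod 2) = 0 := by
      push_cast
      rw [pow_eq_zero_iff (by omega)]
      decide
    rw [hQ]; push_cast at h0 ⊢; rw [mul_comm]; rw [h0]; ring
  have htodd : Odd t := by
    rw [Int.odd_iff]
    rcases Int.emod_two_eq t with h | h
    · exfalso
      have h2 : (2:ℤ) ∣ t := Int.dvd_of_emod_eq_zero h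
      have hcast : ((t : ℤ) : ZMod 2) = 0 := (ZMod.intCast_zmod_eq_zero_iff_dvd t 2).2 h2
      rw [ht] at hcast
      push_cast at hcast
      simp only [hQ2, one_pow, Finset.sum_const, Finset.card_range, nsmul_eq_mul, mul_one] at hcast
      have hdvdb := (ZMod.natCast_eq_zero_iff b 2).1 hcast
      have := Nat.odd_iff.1 hb
      omega
    · exact h
  refine ⟨s * t, hs.mul htodd, ?_⟩
  have h1 : Q - 1 = 2^m * s := by rw [hQ]; ring
  rw [h1] at hgeom
  linarith [hgeom]

lemma qpow_two_pow {q : ℕ} (hq3 : q % 8 = 3) :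
    ∀ j : ℕ, ∃ s : ℤ, Odd s ∧ (q:ℤ)^(2^(j+1)) = 1 + 2^(j+3) * s := by
  intro j
  induction j with
  | zero =>
    obtain ⟨t, ht⟩ : ∃ t : ℕ, q = 8*t + 3 := ⟨q / 8, by omega⟩
    refine ⟨8*(t:ℤ)^2 + 6*t + 1, ⟨4*t^2+3*t, by ring⟩, ?_⟩
    have : (q:ℤ) = 8*(t:ℤ) + 3 := by exact_mod_cast congrArg (Nat.cast : ℕ → ℤ) ht
    rw [this]; ring
  | succ j ih =>
    obtain ⟨s, hs, hQ⟩ := ih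
    refine ⟨s + 2^(j+2) * s^2, hs.add_even ⟨2^(j+1)*s^2, by ring⟩, ?_⟩
    have h2 : (q:ℤ)^(2^(j+2)) = ((q:ℤ)^(2^(j+1)))^2 := by
      rw [← pow_mul]; ring_nf
    rw [h2, hQ]; ring

-- main NT lemma
lemma nt_main {q k d : ℕ} (hq3 : q % 8 = 3) (hk : 1 ≤ k) (hd : 0 < d)
    (hdvd : (2:ℤ)^(k+1) ∣ (q:ℤ)^d - 1) : 2^(k-1) ≤ d := by
  set j := d.factorization 2 with hj
  set b := d / 2^j with hb
  have hdeq : 2^j * b = d := Nat.ordProj_mul_ordCompl_eq_self d 2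
  have hbodd : Odd b := by
    have h := Nat.not_dvd_ordCompl Nat.prime_two hd.ne'
    rw [Nat.odd_iff, ← Nat.two_dvd_ne_zero]
    exact h
  -- Q = q^(2^j) = 1 + 2^m * s with s odd, m = if j = 0 then 1 else j+2
  rcases Nat.eq_zero_or_pos j with hj0 | hjpos
  · -- d odd: q^d = 1 + 2*s', so 2^(k+1) ∣ 2 ⇒ k = 0, contra
    exfalso
    obtain ⟨t, ht⟩ : ∃ t : ℕ, q = 8*t + 3 := ⟨q / 8, by omega⟩
    have hqodd : (q:ℤ) = 1 + 2^1 * (4*(t:ℤ)+1) := by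
      have : (q:ℤ) = 8*(t:ℤ) + 3 := by exact_mod_cast congrArg (Nat.cast : ℕ → ℤ) ht
      rw [this]; ring
    have hdodd : Odd d := by rw [← hdeq, hj0]; simpa using hbodd
    obtain ⟨s', hs', hpow⟩ := geom_odd le_rfl hqodd ⟨2*t, by push_cast; ring⟩ hdodd
    rw [hpow] at hdvd
    have h2 : (2:ℤ)^(k+1) ∣ 2^1 * s' := by simpa using hdvd
    have h3 : (2:ℤ)^2 ∣ 2^1 * s' := dvd_trans (pow_dvd_pow 2 (by omega)) h2
    rw [pow_succ] at h3
    have : (2:ℤ) ∣ s' := (mul_dvd_mul_iff_left (pow_ne_zero 1 (by norm_num : (2:ℤ) ≠ 0))).1 h3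
    rw [Int.odd_iff] at hs'
    omega
  · obtain ⟨s, hs, hQ⟩ := qpow_two_pow hq3 (j-1)
    have hj1 : j - 1 + 1 = j := by omega
    rw [hj1] at hQ
    obtain ⟨s', hs', hpow⟩ := geom_odd (by omega) hQ hs hbodd
    rw [← pow_mul] at hpow
    have hd2 : 2^j * b = d := hdeq
    rw [hd2] at hpow
    rw [hpow] at hdvd
    have h2 : (2:ℤ)^(k+1) ∣ 2^(j-1+3) * s' := by simpa using hdvd
    have hkle : k + 1 ≤ j - 1 + 3 := by
      by_contra hlt
      push_neg at hlt
      have h3 : (2:ℤ)^(j-1+3+1) ∣ 2^(j-1+3) * s' := dvd_trans (pow_dvd_pow 2 (by omega)) h2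
      rw [pow_succ] at h3
      have : (2:ℤ) ∣ s' := (mul_dvd_mul_iff_left (pow_ne_zero _ (by norm_num : (2:ℤ) ≠ 0))).1 h3
      rw [Int.odd_iff] at hs'
      omega
    -- j ≥ k - 1, so d ≥ 2^j ≥ 2^(k-1)
    have hjk : k - 1 ≤ j := by omega
    calc 2^(k-1) ≤ 2^j := Nat.pow_le_pow_right (by norm_num) hjk
    _ ≤ 2^j * b := Nat.le_mul_of_pos_right _ hbodd.pos
    _ = d := hdeq



lemma irred_factor_deg {q n k : ℕ} (hq : q.Prime) (hq3 : q % 8 = 3) (hn : n = 2 ^ k)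
    (hk : 1 ≤ k) (p : Polynomial (ZMod q)) (hp : Irreducible p)
    (hdvd : p ∣ X ^ n + 1) : 2^(k-1) ≤ p.natDegree := by
  haveI : Fact q.Prime := ⟨hq⟩
  haveI : Fact (Irreducible p) := ⟨hp⟩
  set F := AdjoinRoot p with hF
  have hp0 : p ≠ 0 := hp.ne_zero
  let pb := AdjoinRoot.powerBasis hp0
  haveI : Module.Finite (ZMod q) F := pb.finite
  haveI : Finite F := Module.finite_of_finite (ZMod q)
  haveI : Fintype F := Fintype.ofFinite F
  have hrank : Module.finrank (ZMod q) F = p.natDegree := pb.finrank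
  have hcard : Fintype.card F = q ^ p.natDegree := by
    rw [Module.card_eq_pow_finrank (K := ZMod q) (V := F), ZMod.card, hrank]
  set ζ := AdjoinRoot.root p with hζ
  have hroot : (ζ ^ n + 1 : F) = 0 := by
    obtain ⟨c, hc⟩ := hdvd
    have : (Polynomial.aeval ζ) ((X : (ZMod q)[X]) ^ n + 1) = 0 := by
      rw [hc, map_mul, AdjoinRoot.aeval_eq, AdjoinRoot.mk_self, zero_mul]
    simpa using this
  have hζn : (ζ : F) ^ n = -1 := by linear_combination hroot
  haveI : CharP F q := charP_of_injective_algebraMap (algebraMap (ZMod q) F).injective q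
  have hq2 : 2 < q := by omega
  haveI : Fact (2 < q) := ⟨hq2⟩
  have hne : (-1 : F) ≠ 1 := CharP.neg_one_ne_one F q
  have hn0 : n ≠ 0 := by rw [hn]; positivity
  have hζ0 : (ζ : F) ≠ 0 := by
    intro h
    rw [h, zero_pow hn0] at hζn
    exact neg_ne_zero.2 one_ne_zero hζn.symm
  have hord2n : orderOf ζ ∣ 2 * n := by
    apply orderOf_dvd_of_pow_eq_one
    rw [pow_mul', hζn]; exact neg_one_sq
  have hordn : ¬ orderOf ζ ∣ n := by
    intro h
    have := orderOf_dvd_iff_pow_eq_one.1 h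
    rw [hζn] at this
    exact hne this
  have hordeq : orderOf ζ = 2 ^ (k + 1) := by
    have h2n : 2 * n = 2 ^ (k+1) := by rw [hn]; ring
    rw [h2n] at hord2n
    obtain ⟨a, ha, haeq⟩ := (Nat.dvd_prime_pow Nat.prime_two).1 hord2n
    rcases Nat.lt_or_ge a (k+1) with hlt | hge
    · exfalso
      exact hordn (haeq ▸ (hn ▸ pow_dvd_pow 2 (by omega)))
    · rw [haeq]; congr 1; omega
  have hdvdcard : orderOf ζ ∣ Fintype.card F - 1 := by
    apply orderOf_dvd_of_pow_eq_one
    exact FiniteField.pow_card_sub_one_eq_one ζ hζ0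
  rw [hordeq, hcard] at hdvdcard
  have hd : 0 < p.natDegree := hp.natDegree_pos
  have hdvdZ : (2:ℤ)^(k+1) ∣ (q:ℤ)^(p.natDegree) - 1 := by
    have h1 : 1 ≤ q ^ p.natDegree := Nat.one_le_pow _ _ hq.pos
    have := Int.natCast_dvd_natCast.2 hdvdcard
    push_cast [Nat.cast_sub h1] at this
    exact_mod_cast this
  exact nt_main hq3 hk hd hdvdZ



lemma unit_iff {q n k : ℕ} (hq : q.Prime) (hq3 : q % 8 = 3) (hn : n = 2 ^ k) (hk : 1 ≤ k)
    (u : Polynomial (ZMod q)) (hdeg : u.degree < ((n / 2 : ℕ) : WithBot ℕ)) :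
    IsUnit (Ideal.Quotient.mk (Ideal.span {(X : Polynomial (ZMod q)) ^ n + 1}) u) ↔ u ≠ 0 := by
  haveI : Fact q.Prime := ⟨hq⟩
  have hn0 : 0 < n := by rw [hn]; positivity
  have hfdeg : ((X : Polynomial (ZMod q)) ^ n + 1).degree = n := by
    simpa using Polynomial.degree_X_pow_add_C hn0 (1 : ZMod q)
  have hfunit : ¬ IsUnit ((X : Polynomial (ZMod q)) ^ n + 1) := by
    intro h
    have := Polynomial.degree_eq_zero_of_isUnit h
    rw [hfdeg] at this
    exact hn0.ne' (by exact_mod_cast this)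
  have hspan : Ideal.span {(X : Polynomial (ZMod q)) ^ n + 1} ≠ ⊤ := by
    rw [Ne, Ideal.span_singleton_eq_top]
    exact hfunit
  haveI := Ideal.Quotient.nontrivial_iff.mpr hspan
  constructor
  · rintro h rfl
    rw [map_zero] at h
    exact not_isUnit_zero h
  · intro hu0
    have hcop : IsCoprime u ((X : Polynomial (ZMod q)) ^ n + 1) := by
      by_contra hncop
      rw [← EuclideanDomain.gcd_isUnit_iff] at hncop
      set g := EuclideanDomain.gcd u ((X : Polynomial (ZMod q)) ^ n + 1) with hg
      have hg0 : g ≠ 0 := by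
        intro h
        exact hu0 (EuclideanDomain.gcd_eq_zero_iff.1 h).1
      obtain ⟨p, hpirr, hpg⟩ := WfDvdMonoid.exists_irreducible_factor hncop hg0
      have hpf : p ∣ (X : Polynomial (ZMod q)) ^ n + 1 :=
        hpg.trans (EuclideanDomain.gcd_dvd_right _ _)
      have hpl := irred_factor_deg hq hq3 hn hk p hpirr hpf
      have hpu : p ∣ u := hpg.trans (EuclideanDomain.gcd_dvd_left _ _)
      have hdu : p.natDegree ≤ u.natDegree := Polynomial.natDegree_le_of_dvd hpu hu0
      have hun : u.natDegree < n / 2 := by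
        rwa [← Polynomial.natDegree_lt_iff_degree_lt hu0] at hdeg
      have hn2 : n / 2 = 2 ^ (k - 1) := by
        rw [hn, Nat.pow_div hk (by norm_num : 0 < 2)]
      omega
    obtain ⟨a, b, hab⟩ := hcop
    have hz : Ideal.Quotient.mk (Ideal.span {(X : Polynomial (ZMod q)) ^ n + 1}) ((X : Polynomial (ZMod q)) ^ n + 1) = 0 :=
      Ideal.Quotient.eq_zero_iff_mem.2 (Ideal.subset_span rfl)
    have h1 := congrArg (Ideal.Quotient.mk (Ideal.span {(X : Polynomial (ZMod q)) ^ n + 1})) hab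
    rw [map_add, map_mul, map_mul, map_one, hz, mul_zero, add_zero] at h1
    exact IsUnit.of_mul_eq_one _ (by rw [mul_comm]; exact h1)


section
variable {q L m : ℕ}

noncomputable def Sset (q L : ℕ) : Finset (ZMod q) := (Finset.Icc (-(L:ℤ)) (L:ℤ)).image (Int.cast)

lemma Sset_card (hq : 2*L+1 < q) : (Sset q L).card = 2*L+1 := by
  rw [Sset, Finset.card_image_of_injOn, Int.card_Icc]
  · omega
  · intro a ha b hb hab
    simp only [Finset.coe_Icc, Set.mem_Icc] at ha hb
    have hdvd : (q:ℤ) ∣ b - a := ((ZMod.intCast_eq_intCast_iff _ _ _).1 hab).dvd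
    have : b - a = 0 := Int.eq_zero_of_abs_lt_dvd hdvd (by
      rw [abs_lt]; push_cast; omega)
    omega

lemma mem_Sset_iff {x : ZMod q} : x ∈ Sset q L ↔ ∃ z : ℤ, |z| ≤ (L:ℤ) ∧ x = (z : ZMod q) := by
  simp only [Sset, Finset.mem_image, Finset.mem_Icc]
  constructor
  · rintro ⟨z, hz, rfl⟩; exact ⟨z, abs_le.2 hz, rfl⟩
  · rintro ⟨z, hz, rfl⟩; exact ⟨z, abs_le.1 hz, rfl⟩

lemma zero_mem_Sset : (0 : ZMod q) ∈ Sset q L :=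
  mem_Sset_iff.2 ⟨0, by simp, by simp⟩

noncomputable def Cequiv (q L m : ℕ) :
    {u : Polynomial (ZMod q) // u.degree < (m : WithBot ℕ) ∧ ∀ i : ℕ, u.coeff i ∈ Sset q L} ≃
      (Fin m → (Sset q L)) where
  toFun u i := ⟨u.1.coeff i, u.2.2 i⟩
  invFun f := ⟨∑ i : Fin m, Polynomial.monomial (i : ℕ) ((f i : ZMod q)), by
    have hcoeff : ∀ j : ℕ, (∑ i : Fin m, Polynomial.monomial (i:ℕ) ((f i : ZMod q))).coeff j
        = if h : j < m then ((f ⟨j, h⟩ : ZMod q)) else 0 := by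
      intro j
      rw [Polynomial.finset_sum_coeff]
      split_ifs with h
      · rw [Finset.sum_eq_single_of_mem (⟨j, h⟩ : Fin m) (Finset.mem_univ _)]
        · simp [Polynomial.coeff_monomial]
        · intro i _ hij
          rw [Polynomial.coeff_monomial, if_neg]
          exact fun hc => hij (Fin.ext hc)
      · apply Finset.sum_eq_zero
        intro i _
        rw [Polynomial.coeff_monomial, if_neg]
        exact fun hc => h (hc ▸ i.2)
    constructor
    · rw [Polynomial.degree_lt_iff_coeff_zero]
      intro j hj
      rw [hcoeff, dif_neg (by omega)]
    · intro i
      rw [hcoeff]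
      split_ifs with h
      · exact (f ⟨i, h⟩).2
      · exact zero_mem_Sset⟩
  left_inv := by
    rintro ⟨u, hdeg, hmem⟩
    ext j : 2
    simp only
    rw [Polynomial.finset_sum_coeff]
    rcases Nat.lt_or_ge j m with h | h
    · rw [Finset.sum_eq_single_of_mem (⟨j, h⟩ : Fin m) (Finset.mem_univ _)]
      · simp [Polynomial.coeff_monomial]
      · intro i _ hij
        rw [Polynomial.coeff_monomial, if_neg]
        exact fun hc => hij (Fin.ext hc)
    · rw [Finset.sum_eq_zero, eq_comm]
      · exact (Polynomial.degree_lt_iff_coeff_zero _ _).1 hdeg j (by exact_mod_cast h)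
      · intro i _
        rw [Polynomial.coeff_monomial, if_neg]
        exact fun hc => absurd (hc ▸ i.2) (by omega)
  right_inv := by
    intro f
    funext i
    apply Subtype.ext
    simp only
    rw [Polynomial.finset_sum_coeff, Finset.sum_eq_single_of_mem i (Finset.mem_univ _)]
    · simp [Polynomial.coeff_monomial]
    · intro j _ hji
      rw [Polynomial.coeff_monomial, if_neg]
      exact fun hc => hji (Fin.ext hc)

end


theorem stmt9 (q n k : ℕ) (hq : q.Prime) (hq3 : q % 8 = 3) (hn : n = 2 ^ k) (hk : 1 ≤ k)
    (hqbig : 2 * Nat.log 2 n + 1 < q)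
    (C : Set (Polynomial (ZMod q)))
    (hC : C = {c : Polynomial (ZMod q) |
      c.degree < ((n / 2 : ℕ) : WithBot ℕ) ∧
      ∀ i : ℕ, ∃ z : ℤ, |z| ≤ (Nat.log 2 n : ℤ) ∧ c.coeff i = (z : ZMod q)}) :
    (Nat.card {u : Polynomial (ZMod q) // u ∈ C ∧
        IsUnit (Ideal.Quotient.mk (Ideal.span {(X : Polynomial (ZMod q)) ^ n + 1}) u)} : ℝ)
      / (Nat.card {u : Polynomial (ZMod q) // u ∈ C} : ℝ)
      = 1 - ((1 + 2 * (Nat.log 2 n : ℝ)) ^ (n / 2 : ℕ))⁻¹ := by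
  subst hC
  set L := Nat.log 2 n with hL
  set m := n / 2 with hm
  set CC : Set (Polynomial (ZMod q)) := {c : Polynomial (ZMod q) |
      c.degree < ((m : ℕ) : WithBot ℕ) ∧
      ∀ i : ℕ, ∃ z : ℤ, |z| ≤ (L : ℤ) ∧ c.coeff i = (z : ZMod q)} with hCC
  -- equiv with the Sset-form subtype
  have hiff : ∀ u : Polynomial (ZMod q), u ∈ CC ↔
      (u.degree < (m : WithBot ℕ) ∧ ∀ i : ℕ, u.coeff i ∈ Sset q L) := by
    intro u
    simp only [hCC, Set.mem_setOf_eq]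
    exact and_congr Iff.rfl (forall_congr' fun i => (mem_Sset_iff).symm)
  have e1 : {u : Polynomial (ZMod q) // u ∈ CC} ≃
      {u : Polynomial (ZMod q) // u.degree < (m : WithBot ℕ) ∧ ∀ i : ℕ, u.coeff i ∈ Sset q L} :=
    Equiv.subtypeEquivRight hiff
  have etot := e1.trans (Cequiv q L m)
  haveI : Finite {u : Polynomial (ZMod q) // u ∈ CC} := Finite.of_equiv _ etot.symm
  have hCCfin : CC.Finite := Set.finite_coe_iff.1 inferInstance
  have hScard : (Sset q L).card = 2 * L + 1 := Sset_card hqbig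
  have hcardtot : Nat.card {u : Polynomial (ZMod q) // u ∈ CC} = (2 * L + 1) ^ m := by
    rw [Nat.card_congr etot, Nat.card_eq_fintype_card, Fintype.card_fun,
      Fintype.card_coe, Fintype.card_fin, hScard]
  have h0mem : (0 : Polynomial (ZMod q)) ∈ CC := by
    refine ⟨?_, fun i => ⟨0, by simp, by simp⟩⟩
    rw [Polynomial.degree_zero]
    exact WithBot.bot_lt_coe (m : ℕ)
  -- units = nonzero
  have eunit : {u : Polynomial (ZMod q) // u ∈ CC ∧
      IsUnit (Ideal.Quotient.mk (Ideal.span {(X : Polynomial (ZMod q)) ^ n + 1}) u)} ≃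
      {u : Polynomial (ZMod q) // u ∈ CC \ {0}} := by
    refine Equiv.subtypeEquivRight fun u => ?_
    rw [Set.mem_diff, Set.mem_singleton_iff]
    exact and_congr_right fun hu => unit_iff hq hq3 hn hk u hu.1
  have hcardunit : Nat.card {u : Polynomial (ZMod q) // u ∈ CC ∧
      IsUnit (Ideal.Quotient.mk (Ideal.span {(X : Polynomial (ZMod q)) ^ n + 1}) u)}
      = (2 * L + 1) ^ m - 1 := by
    rw [Nat.card_congr eunit]
    have : Nat.card {u : Polynomial (ZMod q) // u ∈ CC \ {0}} = (CC \ {0}).ncard :=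
      (Nat.card_coe_set_eq _)
    rw [this, Set.ncard_diff_singleton_of_mem h0mem, ← hcardtot,
      Nat.card_coe_set_eq]
  rw [hcardunit, hcardtot]
  have hT1 : 1 ≤ (2 * L + 1) ^ m := Nat.one_le_pow _ _ (by omega)
  have hTpos : (0:ℝ) < ((2 * L + 1 : ℕ) : ℝ) ^ m := by positivity
  have hcast : ((2 * L + 1 : ℕ) : ℝ) ^ m = (1 + 2 * (L : ℝ)) ^ m := by
    push_cast; ring_nf
  rw [Nat.cast_sub hT1]
  push_cast
  rw [eq_sub_iff_add_eq]
  have h1 : (1 + 2 * (L : ℝ)) ^ m ≠ 0 := by positivity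
  field_simp
  ring
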